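/- Let M be an additive k-linear category over a field k in which End(1) ≅ k, 1 is an object, and suppose that for every indecomposable object X with M(1,X) ≠ 0, the End(X)-module M(1,X) is simple. Then every P(M)-submodule of M_1 = ⊕_X M(1,X) is a trace submodule Tr_S M_1 for some set S of indecomposable objects X with M(1,X) ≠ 0. -/
import Mathlib


open CategoryTheory Limits

/-- An object is indecomposable if it is nonzero and admits no nontrivial biproduct
decomposition. -/
def IndecObj {C : Type*} [Category C] [Preadditive C] [HasBinaryBiproducts C]
    (X : C) : Prop :=
  ¬ IsZero X ∧ ∀ Y W : C, Nonempty (X ≅ Y ⊞ W) → IsZero Y ∨ IsZero W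

/-- **Every submodule of `M_𝟙` is a trace submodule.**  Let `M` be an additive
Krull–Schmidt `k`-linear category over a field `k` with `End(𝟙) ≅ k`, and suppose that
for every indecomposable object `X` with `M(𝟙,X) ≠ 0` the `End(X)`-module `M(𝟙,X)` is
simple.  Then every `P(M)`-submodule of `M_𝟙 = ⊕_X M(𝟙,X)` (a family of `k`-submodules
closed under postcomposition) is the trace submodule `Tr_S M_𝟙` for some set `S` of
indecomposable objects `X` with `M(𝟙,X) ≠ 0`. -/
theorem submodule_is_trace
    (k : Type*) [Field k] (C : Type*) [Category C] [Preadditive C] [Linear k C]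
    [HasFiniteBiproducts C] [HasBinaryBiproducts C]
    (one : C) (hone : ∀ f : one ⟶ one, ∃ c : k, f = c • 𝟙 one)
    (hKS : ∀ X : C, ∃ (n : ℕ) (D : Fin n → C),
      (∀ i, IsLocalRing (End (D i)) ∧ IndecObj (D i)) ∧ Nonempty (X ≅ ⨁ D))
    (hsimple : ∀ X : C, IndecObj X → (∃ f : one ⟶ X, f ≠ 0) →
      ∀ f : one ⟶ X, f ≠ 0 → ∀ g : one ⟶ X, ∃ e : X ⟶ X, g = f ≫ e)
    (N : ∀ X : C, Submodule k (one ⟶ X))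
    (hN : ∀ (X Y : C) (h : X ⟶ Y) (f : one ⟶ X), f ∈ N X → f ≫ h ∈ N Y) :
    ∃ S : Set C, (∀ X ∈ S, IndecObj X ∧ ∃ f : one ⟶ X, f ≠ 0) ∧
      ∀ X : C, N X = Submodule.span k
        {f : one ⟶ X | ∃ Z ∈ S, ∃ (g : one ⟶ Z) (h : Z ⟶ X), f = g ≫ h} := by
  refine ⟨{Z | IndecObj Z ∧ (∃ f : one ⟶ Z, f ≠ 0) ∧ N Z ≠ ⊥},
    fun X hX => ⟨hX.1, hX.2.1⟩, fun X => le_antisymm ?_ ?_⟩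
  · intro f hf
    obtain ⟨n, D, hD, ⟨e⟩⟩ := hKS X
    have key : f = ∑ i : Fin n,
        (f ≫ e.hom ≫ biproduct.π D i) ≫ (biproduct.ι D i ≫ e.inv) := by
      calc f = f ≫ e.hom ≫ (∑ i : Fin n, biproduct.π D i ≫ biproduct.ι D i) ≫ e.inv := by
              rw [biproduct.total]; simp
        _ = _ := by
              simp only [Preadditive.sum_comp, Preadditive.comp_sum, Category.assoc]
    rw [key]
    apply Submodule.sum_mem
    intro i _
    by_cases h0 : f ≫ e.hom ≫ biproduct.π D i = 0
    · rw [h0, Limits.zero_comp]; exact Submodule.zero_mem _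
    · apply Submodule.subset_span
      refine ⟨D i, ⟨(hD i).2, ⟨_, h0⟩, ?_⟩, _, _, rfl⟩
      intro hbot
      have hmem : f ≫ e.hom ≫ biproduct.π D i ∈ N (D i) := by
        have := hN X (D i) (e.hom ≫ biproduct.π D i) f hf
        simpa using this
      rw [hbot] at hmem
      exact h0 (by simpa using hmem)
  · rw [Submodule.span_le]
    rintro f ⟨Z, ⟨hZind, hZne, hZN⟩, g, h, rfl⟩
    obtain ⟨f₀, hf₀N, hf₀ne⟩ : ∃ f₀ ∈ N Z, f₀ ≠ 0 := by
      by_contra hc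
      push_neg at hc
      exact hZN ((Submodule.eq_bot_iff _).mpr hc)
    obtain ⟨e, he⟩ := hsimple Z hZind hZne f₀ hf₀ne g
    rw [he]
    have : (f₀ ≫ e) ≫ h ∈ N X := hN Z X h _ (hN Z Z e f₀ hf₀N)
    simpa using this
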